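/- Let 0 < ν < √2 and let A be the soliton on finite background. Then for τ ∈ ℝ one has A(0,τ) = 0 if and only if cos(ντ) = 2(1−ν²)/√(4−2ν²). (Indeed φ(0) = 0, P(0) = √2ν³, Q(0) = √2ν, so A(0,τ) = √2ν³/(√2ν − σcos(ντ)) − 1.) -/

import Mathlib

open Real Filter Topology

/-- Benjamin–Feir growth rate `σ = ν√(2−ν²)`. -/
noncomputable def sfbSigma (ν : ℝ) : ℝ := ν * Real.sqrt (2 - ν ^ 2)

/-- Displaced amplitude `G(ξ,τ) = P(ξ)/(Q(ξ) − σ cos(ντ))` of the SFB, with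
`P(ξ) = ν√2·√(2ν²cosh²(σξ) − σ²)` and `Q(ξ) = ν√2·cosh(σξ)`. -/
noncomputable def sfbG (ν ξ τ : ℝ) : ℝ :=
  (ν * Real.sqrt 2 * Real.sqrt (2 * ν ^ 2 * Real.cosh (sfbSigma ν * ξ) ^ 2 - sfbSigma ν ^ 2)) /
  (ν * Real.sqrt 2 * Real.cosh (sfbSigma ν * ξ) - sfbSigma ν * Real.cos (ν * τ))

/-- SFB phase `φ(ξ) = arctan(−(σ/ν²) tanh(σξ))`. -/
noncomputable def sfbPhi (ν ξ : ℝ) : ℝ :=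
  Real.arctan (-(sfbSigma ν / ν ^ 2) * Real.tanh (sfbSigma ν * ξ))

/-- The soliton on finite background: `A(ξ,τ) = e^{−iξ}(G(ξ,τ)e^{iφ(ξ)} − 1)`. -/
noncomputable def sfbA (ν ξ τ : ℝ) : ℂ :=
  Complex.exp (-Complex.I * (ξ : ℂ)) *
    ((sfbG ν ξ τ : ℂ) * Complex.exp (Complex.I * (sfbPhi ν ξ : ℂ)) - 1)

/-- For `0 < ν < √2`, the SFB vanishes at position `ξ = 0` at time `τ`
if and only if `cos(ντ) = 2(1−ν²)/√(4−2ν²)`. -/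
theorem sfb_singular_points_at_zero
    (ν : ℝ) (hν0 : 0 < ν) (hν2 : ν < Real.sqrt 2) (τ : ℝ) :
    sfbA ν 0 τ = 0 ↔ Real.cos (ν * τ) = 2 * (1 - ν ^ 2) / Real.sqrt (4 - 2 * ν ^ 2) := by

  have h2 : 0 < 2 - ν ^ 2 := by
    have h := Real.sq_sqrt (by norm_num : (0:ℝ) ≤ 2)
    nlinarith [Real.sqrt_nonneg 2]
  set s := Real.sqrt (2 - ν ^ 2) with hsdef
  have hs : 0 < s := Real.sqrt_pos.2 h2
  have hs2 : s ^ 2 = 2 - ν ^ 2 := Real.sq_sqrt h2.le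
  set c := Real.cos (ν * τ) with hcdef
  have hσ : sfbSigma ν = ν * s := rfl
  have hφ : sfbPhi ν 0 = 0 := by simp [sfbPhi]
  have hG : sfbG ν 0 τ = (ν * Real.sqrt 2 * ν ^ 2) / (ν * Real.sqrt 2 - ν * s * c) := by
    have hnum : 2 * ν ^ 2 * Real.cosh (sfbSigma ν * 0) ^ 2 - sfbSigma ν ^ 2 = (ν ^ 2) ^ 2 := by
      rw [hσ]; simp [Real.cosh_zero]; nlinarith
    unfold sfbG
    rw [hnum, Real.sqrt_sq (sq_nonneg ν)]
    rw [hσ]; simp [Real.cosh_zero]; rfl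
  have hA : sfbA ν 0 τ = ((sfbG ν 0 τ : ℂ) - 1) := by
    unfold sfbA
    rw [hφ]
    simp
  have hA0 : sfbA ν 0 τ = 0 ↔ sfbG ν 0 τ = 1 := by
    rw [hA, sub_eq_zero]
    exact_mod_cast Iff.rfl
  have hsq2 : Real.sqrt 2 ^ 2 = 2 := Real.sq_sqrt (by norm_num)
  have hsqrt2pos : 0 < Real.sqrt 2 := Real.sqrt_pos.2 (by norm_num)
  have hrhs : Real.sqrt (4 - 2 * ν ^ 2) = Real.sqrt 2 * s := by
    rw [hsdef, ← Real.sqrt_mul (by norm_num : (0:ℝ) ≤ 2)]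
    ring_nf
  rw [hA0, hG, hrhs]
  by_cases hD : ν * Real.sqrt 2 - ν * s * c = 0
  · constructor
    · intro h
      rw [hD, div_zero] at h
      simp at h
    · intro h
      exfalso
      have hc : s * c = Real.sqrt 2 := by
        have := hD
        field_simp at this
        nlinarith [this]
      rw [h] at hc
      have hne : Real.sqrt 2 * s ≠ 0 := by positivity
      have key : s * (2 * (1 - ν ^ 2) / (Real.sqrt 2 * s)) * (Real.sqrt 2 * s)
          = Real.sqrt 2 * (Real.sqrt 2 * s) := by rw [hc]
      rw [mul_assoc, div_mul_cancel₀ _ hne] at key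
      nlinarith [key, hsq2, mul_pos (mul_pos hν0 hν0) hs]
  · rw [div_eq_one_iff_eq hD]
    constructor
    · intro h
      have hsc : s * c = Real.sqrt 2 * (1 - ν ^ 2) := by nlinarith
      field_simp
      nlinarith
    · intro h
      have hsc : s * c = Real.sqrt 2 * (1 - ν ^ 2) := by
        field_simp at h
        nlinarith
      nlinarith
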